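/- There do not exist subspaces P ⊆ W of V with dim P = 2 and dim W = 5 such that every 3-dimensional subspace U with P ⊆ U ⊆ W is Lagrangian. -/

import Mathlib

open Module

/-- A subspace `U` is *isotropic* for the bilinear form `α` if `α` vanishes identically
on `U × U`. -/
def IsIsotropic {V : Type*} [AddCommGroup V] [Module ℂ V]
    (α : V →ₗ[ℂ] V →ₗ[ℂ] ℂ) (U : Submodule ℂ V) : Prop :=
  ∀ u ∈ U, ∀ v ∈ U, α u v = 0

/-- A subspace `U` is *Lagrangian* if it is isotropic of dimension `3`. -/
def IsLagrangian {V : Type*} [AddCommGroup V] [Module ℂ V]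
    (α : V →ₗ[ℂ] V →ₗ[ℂ] ℂ) (U : Submodule ℂ V) : Prop :=
  IsIsotropic α U ∧ Module.finrank ℂ U = 3

/-- Auxiliary: between nested subspaces one can find a subspace of any intermediate
dimension. -/
lemma exists_intermediate_submodule {V : Type*} [AddCommGroup V] [Module ℂ V]
    [FiniteDimensional ℂ V] (k : ℕ) :
    ∀ A B : Submodule ℂ V, A ≤ B → ∀ n : ℕ, Module.finrank ℂ A + k = n →
      n ≤ Module.finrank ℂ B → ∃ U : Submodule ℂ V, A ≤ U ∧ U ≤ B ∧
        Module.finrank ℂ U = n := by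
  induction k with
  | zero =>
    intro A B hAB n hn _
    exact ⟨A, le_rfl, hAB, by omega⟩
  | succ k ih =>
    intro A B hAB n hn hnB
    have hlt : A < B := by
      refine lt_of_le_of_ne hAB fun h => ?_
      subst h
      omega
    obtain ⟨x, hxB, hxA⟩ := SetLike.exists_of_lt hlt
    have hx0 : x ≠ 0 := fun h => hxA (h ▸ A.zero_mem)
    set A' : Submodule ℂ V := A ⊔ (ℂ ∙ x) with hA'
    have hA'B : A' ≤ B := sup_le hAB ((Submodule.span_singleton_le_iff_mem x B).2 hxB)
    have hAA' : A < A' := by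
      refine lt_of_le_of_ne le_sup_left fun h => ?_
      exact hxA (h ▸ Submodule.mem_sup_right (Submodule.mem_span_singleton_self x))
    have h1 : Module.finrank ℂ A < Module.finrank ℂ A' :=
      Submodule.finrank_lt_finrank_of_lt hAA'
    have h2 : Module.finrank ℂ A' ≤ Module.finrank ℂ A + 1 := by
      have h := Submodule.finrank_add_le_finrank_add_finrank A (ℂ ∙ x)
      rw [← hA'] at h
      have hs : Module.finrank ℂ (ℂ ∙ x) = 1 := finrank_span_singleton hx0
      omega
    have hA'eq : Module.finrank ℂ A' = Module.finrank ℂ A + 1 := by omega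
    exact (ih A' B hA'B n (by omega) hnB).imp fun U ⟨h1, h2, h3⟩ =>
      ⟨le_trans hAA'.le h1, h2, h3⟩

/-- There are no subspaces `P ⊆ W ⊆ V` with `dim P = 2` and `dim W = 5` such that every
`3`-dimensional subspace `U` with `P ⊆ U ⊆ W` is Lagrangian. -/
theorem no_net_of_lagrangian_subspaces
    (V : Type*) [AddCommGroup V] [Module ℂ V] [FiniteDimensional ℂ V]
    (hV : Module.finrank ℂ V = 6)
    (α : V →ₗ[ℂ] V →ₗ[ℂ] ℂ)
    (halt : ∀ v : V, α v v = 0)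
    (hnd : ∀ v : V, (∀ w : V, α v w = 0) → v = 0) :
    ¬ ∃ P W : Submodule ℂ V, P ≤ W ∧ Module.finrank ℂ P = 2 ∧ Module.finrank ℂ W = 5 ∧
        ∀ U : Submodule ℂ V, P ≤ U → U ≤ W → Module.finrank ℂ U = 3 → IsLagrangian α U := by
  rintro ⟨P, W, hPW, hP2, hW5, hlag⟩
  set B : LinearMap.BilinForm ℂ V := α with hB
  have hBalt : B.IsAlt := halt
  have hBrefl : B.IsRefl := hBalt.isRefl
  have hBnd : B.Nondegenerate := hBrefl.nondegenerate_iff_separatingLeft.mpr hnd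
  -- every element of W is orthogonal to P
  have key : W ≤ B.orthogonal P := by
    intro w hw
    rw [LinearMap.BilinForm.mem_orthogonal_iff]
    intro p hp
    -- build a 3-dimensional U with P ⊔ span w ≤ U ≤ W
    set A : Submodule ℂ V := P ⊔ (ℂ ∙ w) with hA
    have hAW : A ≤ W := sup_le hPW ((Submodule.span_singleton_le_iff_mem w W).2 hw)
    have hAle : Module.finrank ℂ A ≤ 3 := by
      have h := Submodule.finrank_add_le_finrank_add_finrank P (ℂ ∙ w)
      rw [← hA] at h
      have hs : Module.finrank ℂ (ℂ ∙ w) ≤ 1 := by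
        rcases eq_or_ne w 0 with rfl | hw0
        · rw [Submodule.span_zero_singleton, finrank_bot]; omega
        · rw [finrank_span_singleton hw0]
      omega
    obtain ⟨U, hAU, hUW, hU3⟩ := exists_intermediate_submodule (3 - Module.finrank ℂ A) A W
      hAW 3 (by omega) (by omega)
    obtain ⟨hiso, -⟩ := hlag U (le_trans (le_sup_left : P ≤ A) hAU) hUW hU3
    exact hiso p (hAU (Submodule.mem_sup_left hp)) w
      (hAU (Submodule.mem_sup_right (Submodule.mem_span_singleton_self w)))
  have horth : Module.finrank ℂ (B.orthogonal P) = 4 := by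
    rw [LinearMap.BilinForm.finrank_orthogonal hBnd, hV, hP2]
  have := Submodule.finrank_mono key
  omega
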